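/- Let G be the group of order 125 with underlying set ZMod 25 × ZMod 5 and multiplication (a,c) * (a',c') = (a + 6^c * a', c + c') (the semidirect product ℤ/25 ⋊ ℤ/5 in which the generator 1 of ℤ/5 acts on ℤ/25 by multiplication by 6). Let X = Option G, writing ∞ for none, with G acting on X by left translation (g • some x = some (g * x), g • ∞ = ∞). Let ℬ be the family of all left translates of the five base blocks B1 = {(0,0),(0,1),(1,0),(3,3),(6,4),(9,4)}, B2 = {(0,0),(0,2),(7,1),(9,0),(19,1),(24,3)}, B3 = {(0,0),(1,2),(8,0),(10,4),(20,2),(22,0)}, B4 = {(0,0),(2,2),(5,1),(16,4),(18,4),(19,0)}, B5 = {(0,0),(5,0),(10,0),(15,0),(20,0)} ∪ {∞} (group elements embedded in X via some). Then every block of ℬ has exactly 6 elements and every pair of distinct points of X is contained in exactly one block of ℬ; that is, ℬ is a Steiner system S(2,6,126) (a unital of order 5) on X, invariant under the left translation action with the single fixed point ∞. -/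

import Mathlib

/-- Multiplication of the semidirect product `ℤ/25 ⋊ ℤ/5` with underlying set
`ZMod 25 × ZMod 5`, where the generator `1` of `ℤ/5` acts on the generator `1` of
`ℤ/25` by sending it to `6`: `(a,c) * (a',c') = (a + 6^c * a', c + c')`. -/
def gmul5 (p q : ZMod 25 × ZMod 5) : ZMod 25 × ZMod 5 :=
  (p.1 + 6 ^ p.2.val * q.1, p.2 + q.2)

/-- Left translation action of `G` on `Option G`:
`g • some x = some (g * x)`, `g • ∞ = ∞`. -/
def trG5 (g : ZMod 25 × ZMod 5) :
    Option (ZMod 25 × ZMod 5) → Option (ZMod 25 × ZMod 5) :=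
  Option.map (gmul5 g)

/-- The five base blocks of the difference family. -/
def baseBlocks5 : List (Finset (Option (ZMod 25 × ZMod 5))) :=
  [ {some (0, 0), some (0, 1), some (1, 0), some (3, 3), some (6, 4), some (9, 4)},
    {some (0, 0), some (0, 2), some (7, 1), some (9, 0), some (19, 1), some (24, 3)},
    {some (0, 0), some (1, 2), some (8, 0), some (10, 4), some (20, 2), some (22, 0)},
    {some (0, 0), some (2, 2), some (5, 1), some (16, 4), some (18, 4), some (19, 0)},
    {some (0, 0), some (5, 0), some (10, 0), some (15, 0), some (20, 0), none} ]

/-- The family of all left translates of the base blocks. -/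
def blocks5 : Set (Finset (Option (ZMod 25 × ZMod 5))) :=
  { B | ∃ g : ZMod 25 × ZMod 5, ∃ B0 ∈ baseBlocks5, B = B0.image (trG5 g) }

abbrev Gp := ZMod 25 × ZMod 5
abbrev Xp := Option Gp

def blockOf (g : Gp) (i : Fin 5) : Finset Xp :=
  (baseBlocks5.get i).image (trG5 g)

def ginv (g : Gp) : Gp := (-(6 ^ (-g.2).val) * g.1, -g.2)

lemma pow6add : ∀ a b : ZMod 5, (6 : ZMod 25) ^ (a + b).val = 6 ^ a.val * 6 ^ b.val := by
  decide

lemma gassoc (g h k : Gp) : gmul5 (gmul5 g h) k = gmul5 g (gmul5 h k) := by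
  unfold gmul5
  refine Prod.ext ?_ (by simp [add_assoc])
  simp only
  rw [pow6add]
  ring

lemma gone_mul (x : Gp) : gmul5 (0, 0) x = x := by
  unfold gmul5
  refine Prod.ext ?_ (by simp)
  show 0 + 6 ^ (0 : ZMod 5).val * x.1 = x.1
  norm_num

lemma ginv_mul (g : Gp) : gmul5 (ginv g) g = (0, 0) := by
  unfold gmul5 ginv
  refine Prod.ext ?_ (by simp)
  simp only
  ring

lemma pow6cancel : ∀ c : ZMod 5, (6 : ZMod 25) ^ c.val * 6 ^ (-c).val = 1 := by decide

lemma gmul_inv (g : Gp) : gmul5 g (ginv g) = (0, 0) := by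
  unfold gmul5 ginv
  refine Prod.ext ?_ (by simp)
  simp only
  have := pow6cancel g.2
  change g.1 + 6 ^ g.2.val * (-(6:ZMod 25) ^ (-g.2).val * g.1) = 0
  rw [neg_mul, mul_neg, ← mul_assoc, this]
  ring

lemma trG5_comp (g h : Gp) (x : Xp) : trG5 g (trG5 h x) = trG5 (gmul5 g h) x := by
  cases x with
  | none => rfl
  | some y => simp [trG5, gassoc]

lemma trG5_id (x : Xp) : trG5 (0, 0) x = x := by
  cases x with
  | none => rfl
  | some y => show some (gmul5 (0,0) y) = some y; rw [gone_mul]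

lemma trG5_inj (g : Gp) : Function.Injective (trG5 g) := by
  intro x y h
  have : trG5 (ginv g) (trG5 g x) = trG5 (ginv g) (trG5 g y) := by rw [h]
  rwa [trG5_comp, trG5_comp, ginv_mul, trG5_id, trG5_id] at this

lemma image_blockOf (h g : Gp) (i : Fin 5) :
    (blockOf g i).image (trG5 h) = blockOf (gmul5 h g) i := by
  unfold blockOf
  rw [Finset.image_image]
  exact Finset.image_congr (fun x _ => trG5_comp h g x)

lemma mem_blocks5 (B : Finset Xp) : B ∈ blocks5 ↔ ∃ g : Gp, ∃ i : Fin 5, B = blockOf g i := by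
  constructor
  · rintro ⟨g, B0, hB0, rfl⟩
    obtain ⟨i, hi⟩ := List.mem_iff_get.mp hB0
    exact ⟨g, i, by subst hi; rfl⟩
  · rintro ⟨g, i, rfl⟩
    exact ⟨g, baseBlocks5.get i, baseBlocks5.get_mem i, rfl⟩

lemma D1 : ∀ i : Fin 5, (baseBlocks5.get i).card = 6 := by decide

set_option maxRecDepth 1000000 in
set_option maxHeartbeats 8000000 in
lemma D2_0 : ∀ g : Gp, ∀ j : Fin 5, blockOf (0,0) 0 ≠ blockOf g j →
    (blockOf (0,0) 0 ∩ blockOf g j).card ≤ 1 := by decide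

set_option maxRecDepth 1000000 in
set_option maxHeartbeats 8000000 in
lemma D2_1 : ∀ g : Gp, ∀ j : Fin 5, blockOf (0,0) 1 ≠ blockOf g j →
    (blockOf (0,0) 1 ∩ blockOf g j).card ≤ 1 := by decide

set_option maxRecDepth 1000000 in
set_option maxHeartbeats 8000000 in
lemma D2_2 : ∀ g : Gp, ∀ j : Fin 5, blockOf (0,0) 2 ≠ blockOf g j →
    (blockOf (0,0) 2 ∩ blockOf g j).card ≤ 1 := by decide

set_option maxRecDepth 1000000 in
set_option maxHeartbeats 8000000 in
lemma D2_3 : ∀ g : Gp, ∀ j : Fin 5, blockOf (0,0) 3 ≠ blockOf g j →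
    (blockOf (0,0) 3 ∩ blockOf g j).card ≤ 1 := by decide

set_option maxRecDepth 1000000 in
set_option maxHeartbeats 8000000 in
lemma D2_4 : ∀ g : Gp, ∀ j : Fin 5, blockOf (0,0) 4 ≠ blockOf g j →
    (blockOf (0,0) 4 ∩ blockOf g j).card ≤ 1 := by decide

lemma D2 : ∀ i : Fin 5, ∀ g : Gp, ∀ j : Fin 5,
    blockOf (0,0) i ≠ blockOf g j →
    (blockOf (0,0) i ∩ blockOf g j).card ≤ 1 := by
  intro i
  fin_cases i
  · exact D2_0
  · exact D2_1
  · exact D2_2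
  · exact D2_3
  · exact D2_4

set_option maxRecDepth 1000000 in
set_option maxHeartbeats 8000000 in
lemma D3 : ∀ x : Xp, x ≠ some (0,0) →
    ∃ g : Gp, ∃ i : Fin 5, some (0,0) ∈ blockOf g i ∧ x ∈ blockOf g i := by decide

-- distinct blocks meet in at most one point
lemma atMostOne (B B' : Finset Xp) (hB : B ∈ blocks5) (hB' : B' ∈ blocks5)
    (h2 : 2 ≤ (B ∩ B').card) : B = B' := by
  obtain ⟨g, i, rfl⟩ := (mem_blocks5 B).mp hB
  obtain ⟨g', j, rfl⟩ := (mem_blocks5 B').mp hB'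
  by_contra hne
  set h := ginv g
  have hinj := trG5_inj h
  have key : ((blockOf g i).image (trG5 h) ∩ (blockOf g' j).image (trG5 h)).card ≤ 1 := by
    rw [image_blockOf, image_blockOf, ginv_mul]
    apply D2
    rw [← ginv_mul g, ← image_blockOf, ← image_blockOf]
    intro hEq
    exact hne (Finset.image_injective hinj hEq)
  rw [← Finset.image_inter _ _ hinj, Finset.card_image_of_injective _ hinj] at key
  omega

lemma existsBlockAux (a : Gp) (q : Xp) (hne : q ≠ some a) :
    ∃ B ∈ blocks5, some a ∈ B ∧ q ∈ B := by
  set h := ginv a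
  have hq' : trG5 h q ≠ some (0, 0) := by
    intro hEq
    apply hne
    have : trG5 h q = trG5 h (some a) := by
      rw [hEq]; show some (0,0) = some (gmul5 h a); rw [ginv_mul]
    exact trG5_inj h this
  obtain ⟨g, i, h1, h2⟩ := D3 (trG5 h q) hq'
  refine ⟨(blockOf g i).image (trG5 a), ?_, ?_, ?_⟩
  · rw [image_blockOf]; exact (mem_blocks5 _).mpr ⟨_, i, rfl⟩
  · have : trG5 a (some (0,0)) = some a := by
      show some (gmul5 a (0,0)) = some a
      have : gmul5 a (0,0) = a := by
        unfold gmul5; refine Prod.ext (by simp) (by simp)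
      rw [this]
    rw [← this]; exact Finset.mem_image_of_mem _ h1
  · have : trG5 a (trG5 h q) = q := by rw [trG5_comp, gmul_inv, trG5_id]
    rw [← this]; exact Finset.mem_image_of_mem _ h2

lemma existsBlock (p q : Xp) (hne : p ≠ q) : ∃ B ∈ blocks5, p ∈ B ∧ q ∈ B := by
  cases p with
  | some a => exact existsBlockAux a q (fun h => hne h.symm)
  | none =>
    cases q with
    | none => exact absurd rfl hne
    | some b =>
      obtain ⟨B, hB, h1, h2⟩ := existsBlockAux b none (by simp)
      exact ⟨B, hB, h2, h1⟩

theorem unital_Z25semiZ5_design1 :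
    (∀ B ∈ blocks5, B.card = 6) ∧
    (∀ p q : Option (ZMod 25 × ZMod 5), p ≠ q →
      ∃! B, B ∈ blocks5 ∧ p ∈ B ∧ q ∈ B) ∧
    (∀ g : ZMod 25 × ZMod 5, ∀ B ∈ blocks5, B.image (trG5 g) ∈ blocks5) ∧
    (∀ g : ZMod 25 × ZMod 5, trG5 g none = none) ∧
    (∀ g : ZMod 25 × ZMod 5, g ≠ (0, 0) →
      ∀ x : Option (ZMod 25 × ZMod 5), trG5 g x = x → x = none) := by
  refine ⟨?_, ?_, ?_, ?_, ?_⟩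
  · intro B hB
    obtain ⟨g, i, rfl⟩ := (mem_blocks5 B).mp hB
    rw [blockOf, Finset.card_image_of_injective _ (trG5_inj g)]
    exact D1 i
  · intro p q hpq
    obtain ⟨B, hB, hp, hq⟩ := existsBlock p q hpq
    refine ⟨B, ⟨hB, hp, hq⟩, ?_⟩
    rintro B' ⟨hB', hp', hq'⟩
    apply atMostOne B' B hB' hB
    have hsub : ({p, q} : Finset Xp) ⊆ B' ∩ B := by
      intro x hx
      rcases Finset.mem_insert.mp hx with rfl | hx
      · exact Finset.mem_inter.mpr ⟨hp', hp⟩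
      · rw [Finset.mem_singleton.mp hx]; exact Finset.mem_inter.mpr ⟨hq', hq⟩
    calc 2 = ({p, q} : Finset Xp).card := (Finset.card_pair hpq).symm
    _ ≤ _ := Finset.card_le_card hsub
  · intro g B hB
    obtain ⟨g', i, rfl⟩ := (mem_blocks5 B).mp hB
    rw [image_blockOf]
    exact (mem_blocks5 _).mpr ⟨_, i, rfl⟩
  · intro g; rfl
  · intro g hg x hx
    cases x with
    | none => rfl
    | some y =>
      exfalso
      apply hg
      have hy : gmul5 g y = y := Option.some.inj hx
      have h2 : g.2 + y.2 = y.2 := congrArg Prod.snd hy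
      have hg2 : g.2 = 0 := by
        have := add_right_cancel (b := y.2) (by rw [h2, zero_add] : g.2 + y.2 = 0 + y.2)
        exact this
      have h1 : g.1 + 6 ^ g.2.val * y.1 = y.1 := congrArg Prod.fst hy
      rw [hg2] at h1
      have : (6 : ZMod 25) ^ (0 : ZMod 5).val = 1 := by decide
      rw [this, one_mul] at h1
      have hg1 : g.1 = 0 := by
        have := add_right_cancel (b := y.1) (by rw [h1, zero_add] : g.1 + y.1 = 0 + y.1)
        exact this
      exact Prod.ext hg1 hg2
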